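/- arXiv:1805.07495 — 3 statements merged into one kernel-verified Lean document; each statement's English description precedes it below -/
import Mathlib

section
/- (Lemma: sparsity pattern via strict dual feasibility.) Let L : ℝ^p → ℝ be convex and differentiable, λ > 0, and N ⊆ {1,…,p}. Consider F(θ) := L(θ) + λ Σ_{j∉N} |θ_j|. Suppose θ̂ is a global minimizer of F and ẑ ∈ ℝ^p satisfies: ∇L(θ̂) + λ ẑ = 0; ẑ_j = 0 for all j ∈ N; |ẑ_j| ≤ 1 and ẑ_j θ̂_j = |θ̂_j| for all j ∉ N. Then every global minimizer θ̃ of F satisfies θ̃_j = 0 for every index j ∉ N with |ẑ_j| < 1. -/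
open Finset
open scoped RealInnerProductSpace

lemma gradient_inequality_of_convexOn
    {E : Type*} [NormedAddCommGroup E] [InnerProductSpace ℝ E] [CompleteSpace E]
    (L : E → ℝ) (hconv : ConvexOn ℝ Set.univ L) (hdiff : Differentiable ℝ L)
    (x y : E) : L x + (inner ℝ (gradient L x) (y - x) : ℝ) ≤ L y := by
  rcases eq_or_ne y x with rfl | hne
  · simp
  · set A : ℝ →ᵃ[ℝ] E := AffineMap.lineMap x y with hA
    have hAval : ∀ t : ℝ, A t = x + t • (y - x) := by
      intro t; simp [hA, AffineMap.lineMap_apply]; abel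
    have hgconv : ConvexOn ℝ Set.univ (L ∘ A) := by
      have := hconv.comp_affineMap A
      simpa using this
    have hcurve : HasDerivAt (fun t : ℝ => A t) (y - x) 0 := by
      have : HasDerivAt (fun t : ℝ => x + t • (y - x)) (y - x) 0 := by
        simpa using ((hasDerivAt_id (0:ℝ)).smul_const (y - x)).const_add x
      simpa [funext hAval] using this
    have hL : HasFDerivAt L (InnerProductSpace.toDual ℝ E (gradient L x)) x :=
      (hdiff x).hasGradientAt.hasFDerivAt
    have hg : HasDerivAt (L ∘ A) (inner ℝ (gradient L x) (y - x) : ℝ) 0 := by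
      have h0 : A (0:ℝ) = x := by simp [hAval]
      have := HasFDerivAt.comp_hasDerivAt (0:ℝ) (h0 ▸ hL) hcurve
      simpa [h0] using this
    have hslope := hgconv.le_slope_of_hasDerivAt (Set.mem_univ (0:ℝ))
      (Set.mem_univ (1:ℝ)) one_pos hg
    have h1 : A (1:ℝ) = y := by simp [hAval]
    have h0 : A (0:ℝ) = x := by simp [hAval]
    rw [slope_def_field] at hslope
    simp only [Function.comp, h0, h1] at hslope
    have : (inner ℝ (gradient L x) (y - x) : ℝ) ≤ L y - L x := by
      simpa using hslope
    linarith

/-- Sparsity pattern via strict dual feasibility. If `θ̂` is a global minimizer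
of `F(θ) = L(θ) + λ ∑_{j ∉ N} |θ j|` with dual certificate `ẑ` satisfying
`∇L(θ̂) + λ ẑ = 0`, `ẑ_j = 0` on `N`, `|ẑ_j| ≤ 1` and `ẑ_j θ̂_j = |θ̂_j|` off `N`,
then every global minimizer `θ̃` of `F` vanishes at every `j ∉ N` with `|ẑ_j| < 1`. -/
theorem sparsity_pattern_of_strict_dual_feasibility
    (p : ℕ) (L : EuclideanSpace ℝ (Fin p) → ℝ)
    (hLconv : ConvexOn ℝ Set.univ L) (hLdiff : Differentiable ℝ L)
    (lam : ℝ) (hlam : 0 < lam) (N : Finset (Fin p))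
    (F : EuclideanSpace ℝ (Fin p) → ℝ)
    (hF : F = fun θ => L θ + lam * ∑ j ∈ Nᶜ, |θ j|)
    (θhat zhat : EuclideanSpace ℝ (Fin p))
    (hmin : ∀ θ, F θhat ≤ F θ)
    (hstat : gradient L θhat + lam • zhat = 0)
    (hzN : ∀ j ∈ N, zhat j = 0)
    (hzfeas : ∀ j ∉ N, |zhat j| ≤ 1 ∧ zhat j * θhat j = |θhat j|) :
    ∀ θtilde : EuclideanSpace ℝ (Fin p), (∀ θ, F θtilde ≤ F θ) →
      ∀ j ∉ N, |zhat j| < 1 → θtilde j = 0 := by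
  intro θt hmin2 j hjN hzj
  have hFeq : F θt = F θhat := le_antisymm (hmin2 θhat) (hmin θt)
  have hgrad : gradient L θhat = -(lam • zhat) :=
    (neg_eq_of_add_eq_zero_left hstat).symm
  -- gradient inequality
  have hGI := gradient_inequality_of_convexOn L hLconv hLdiff θhat θt
  rw [hgrad] at hGI
  have hinner : (inner ℝ (-(lam • zhat)) (θt - θhat) : ℝ)
      = -lam * ∑ i ∈ Nᶜ, zhat i * (θt i - θhat i) := by
    rw [inner_neg_left, real_inner_smul_left]
    have : (inner ℝ zhat (θt - θhat) : ℝ) = ∑ i, zhat i * (θt i - θhat i) := by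
      rw [PiLp.inner_apply]
      refine Finset.sum_congr rfl fun i _ => ?_
      simp [RCLike.inner_apply, mul_comm]
    rw [this]
    have hsub : ∑ i, zhat i * (θt i - θhat i) = ∑ i ∈ Nᶜ, zhat i * (θt i - θhat i) := by
      refine (Finset.sum_subset (Finset.subset_univ _) fun i _ hi => ?_).symm
      rw [Finset.mem_compl, not_not] at hi
      rw [hzN i hi, zero_mul]
    rw [hsub]; ring
  rw [hinner] at hGI
  -- key sum inequality
  have hShat : ∑ i ∈ Nᶜ, zhat i * θhat i = ∑ i ∈ Nᶜ, |θhat i| :=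
    Finset.sum_congr rfl fun i hi => (hzfeas i (Finset.mem_compl.mp hi)).2
  have hkey : ∑ i ∈ Nᶜ, (|θt i| - zhat i * θt i) ≤ 0 := by
    have hL : L θt - L θhat = lam * ∑ i ∈ Nᶜ, |θhat i| - lam * ∑ i ∈ Nᶜ, |θt i| := by
      have := hFeq; rw [hF] at this; simp only at this; linarith
    have expand : ∑ i ∈ Nᶜ, zhat i * (θt i - θhat i)
        = ∑ i ∈ Nᶜ, zhat i * θt i - ∑ i ∈ Nᶜ, |θhat i| := by
      rw [← hShat, ← Finset.sum_sub_distrib]; exact Finset.sum_congr rfl fun i _ => by ring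
    rw [expand] at hGI
    rw [Finset.sum_sub_distrib]
    nlinarith [hGI, hL]
  have hnonneg : ∀ i ∈ Nᶜ, 0 ≤ |θt i| - zhat i * θt i := by
    intro i hi
    have hz := (hzfeas i (Finset.mem_compl.mp hi)).1
    have : zhat i * θt i ≤ |θt i| := by
      calc zhat i * θt i ≤ |zhat i * θt i| := le_abs_self _
        _ = |zhat i| * |θt i| := abs_mul _ _
        _ ≤ 1 * |θt i| := by apply mul_le_mul_of_nonneg_right hz (abs_nonneg _)
        _ = |θt i| := one_mul _
    linarith
  have hsum0 : ∀ i ∈ Nᶜ, |θt i| - zhat i * θt i = 0 := by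
    rw [← Finset.sum_eq_zero_iff_of_nonneg hnonneg]
    exact le_antisymm hkey (Finset.sum_nonneg hnonneg)
  have hj := hsum0 j (Finset.mem_compl.mpr hjN)
  by_contra hne
  have habs : 0 < |θt j| := abs_pos.mpr hne
  have : |θt j| = zhat j * θt j := by linarith
  have hlt : zhat j * θt j ≤ |zhat j| * |θt j| := by
    calc zhat j * θt j ≤ |zhat j * θt j| := le_abs_self _
      _ = |zhat j| * |θt j| := abs_mul _ _
  nlinarith
end

section
/- (Theorem 2, ℓ2 error bound, case h ≥ k.) Let p, n ≥ 1, an integer h ≥ 0, constants κ > 0, τ₁ ≥ 0, λ > 0, ρ > 0. Let Δ ∈ ℝ^p, let H ⊆ {1,…,p} with |H| = h, and let g₀, g₁ ∈ ℝ^p. Assume: (i) κ‖Δ‖₂² − τ₁ (log p / n)‖Δ‖₁² ≤ ⟨g₁ − g₀, Δ⟩; (ii) ⟨g₁, Δ⟩ ≤ −λ‖Δ_{H^c}‖₁; (iii) ‖g₀‖∞ ≤ λ/4; (iv) ‖Δ‖₁ ≤ 2ρ and 2ρ τ₁ (log p / n) ≤ λ/4. Then ‖Δ‖₂ ≤ λ√h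 / (2κ). -/
open Finset

/-- Theorem 2, ℓ2 error bound, case `h ≥ k`. Under restricted strong convexity
(i), the first-order local-optimality inequality (ii) for the unpenalized set
`H`, a bound on the gradient at the truth (iii), and side conditions (iv),
the error satisfies `‖Δ‖₂ ≤ λ√h/(2κ)`. -/
theorem l2_error_bound_h_ge_k
    (p n h : ℕ) (hp : 1 ≤ p) (hn : 1 ≤ n)
    (κ τ₁ lam ρ : ℝ) (hκ : 0 < κ) (hτ₁ : 0 ≤ τ₁) (hlam : 0 < lam) (hρ : 0 < ρ)
    (Δ : Fin p → ℝ)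
    (H : Finset (Fin p)) (hH : H.card = h)
    (g₀ g₁ : Fin p → ℝ)
    (hrsc : κ * (∑ j, (Δ j) ^ 2) - τ₁ * (Real.log p / n) * (∑ j, |Δ j|) ^ 2 ≤
      ∑ j, (g₁ j - g₀ j) * Δ j)
    (hopt : ∑ j, g₁ j * Δ j ≤ -(lam * ∑ j ∈ Hᶜ, |Δ j|))
    (hg₀ : ∀ j, |g₀ j| ≤ lam / 4)
    (hΔ1 : ∑ j, |Δ j| ≤ 2 * ρ)
    (hside : 2 * ρ * τ₁ * (Real.log p / n) ≤ lam / 4) :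
    Real.sqrt (∑ j, (Δ j) ^ 2) ≤ lam * Real.sqrt h / (2 * κ) := by
  set A : ℝ := ∑ j, (Δ j) ^ 2 with hA
  set L1 : ℝ := ∑ j, |Δ j| with hL1
  have hA0 : 0 ≤ A := Finset.sum_nonneg fun j _ => sq_nonneg _
  have hL10 : 0 ≤ L1 := Finset.sum_nonneg fun j _ => abs_nonneg _
  have hSH0 : 0 ≤ ∑ j ∈ H, |Δ j| := Finset.sum_nonneg fun j _ => abs_nonneg _
  have hSHc0 : 0 ≤ ∑ j ∈ Hᶜ, |Δ j| := Finset.sum_nonneg fun j _ => abs_nonneg _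
  have hlogn : 0 ≤ Real.log p / n := by
    apply div_nonneg (Real.log_nonneg (by exact_mod_cast hp)) (by positivity)
  -- split L1
  have hsplit : (∑ j ∈ H, |Δ j|) + ∑ j ∈ Hᶜ, |Δ j| = L1 :=
    Finset.sum_add_sum_compl H _
  -- bound on ⟨g₀, Δ⟩
  have hg0bound : -(∑ j, g₀ j * Δ j) ≤ (lam / 4) * L1 := by
    rw [hL1, Finset.mul_sum, ← Finset.sum_neg_distrib]
    apply Finset.sum_le_sum
    intro j _
    calc -(g₀ j * Δ j) ≤ |g₀ j * Δ j| := neg_le_abs _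
      _ = |g₀ j| * |Δ j| := abs_mul _ _
      _ ≤ (lam / 4) * |Δ j| := mul_le_mul_of_nonneg_right (hg₀ j) (abs_nonneg _)
  -- bound the tau term
  have htau : τ₁ * (Real.log p / n) * L1 ^ 2 ≤ (lam / 4) * L1 := by
    have h1 : τ₁ * (Real.log p / n) * L1 ^ 2 ≤ (2 * ρ * τ₁ * (Real.log p / n)) * L1 := by
      have : τ₁ * (Real.log p / n) * L1 ≤ 2 * ρ * (τ₁ * (Real.log p / n)) := by
        exact mul_le_mul_of_nonneg_left hΔ1 (by positivity) |>.trans_eq (mul_comm _ _)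
      nlinarith
    exact h1.trans (mul_le_mul_of_nonneg_right hside hL10)
  -- Cauchy-Schwarz on H
  have hCS : (∑ j ∈ H, |Δ j|) ^ 2 ≤ (h : ℝ) * A := by
    have := sq_sum_le_card_mul_sum_sq (s := H) (f := fun j => |Δ j|)
    simp only [sq_abs] at this
    calc (∑ j ∈ H, |Δ j|) ^ 2 ≤ (H.card : ℝ) * ∑ j ∈ H, (Δ j) ^ 2 := by
          exact_mod_cast this
      _ ≤ (h : ℝ) * A := by
          rw [hH]
          exact mul_le_mul_of_nonneg_left
            (Finset.sum_le_sum_of_subset_of_nonneg (Finset.subset_univ H)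
              (fun j _ _ => sq_nonneg _)) (by positivity)
  have hSH : ∑ j ∈ H, |Δ j| ≤ Real.sqrt h * Real.sqrt A := by
    rw [← Real.sqrt_mul (by positivity)]
    calc ∑ j ∈ H, |Δ j| = Real.sqrt ((∑ j ∈ H, |Δ j|) ^ 2) := (Real.sqrt_sq hSH0).symm
      _ ≤ Real.sqrt ((h : ℝ) * A) := Real.sqrt_le_sqrt hCS
  -- main chain
  have hsum : ∑ j, (g₁ j - g₀ j) * Δ j = (∑ j, g₁ j * Δ j) - ∑ j, g₀ j * Δ j := by
    rw [← Finset.sum_sub_distrib]; congr 1; ext j; ring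
  have hmain : κ * A ≤ (lam / 2) * (Real.sqrt h * Real.sqrt A) := by
    have : κ * A ≤ (lam / 2) * ∑ j ∈ H, |Δ j| := by
      have := hrsc
      rw [hsum] at this
      nlinarith [hsplit, hopt, hg0bound, htau]
    exact this.trans (mul_le_mul_of_nonneg_left hSH (by positivity))
  -- finish
  have hsq : Real.sqrt A ^ 2 = A := Real.sq_sqrt hA0
  rcases eq_or_lt_of_le (Real.sqrt_nonneg A) with h0 | h0
  · rw [← h0]; positivity
  · rw [le_div_iff₀ (by positivity)]
    nlinarith [hmain, hsq]
end

section
/- (Per-iteration descent of the block coordinate descent algorithm, core of Theorem 3.) Let L : ℝ^p → ℝ be differentiable with L_f-Lipschitz gradient (L_f > 0), for each i ∈ {1,…,p} let r_i : ℝ^p → ℝ be convex, let λ > 0, τ > 0, η = 1/L_f, and let S ⊆ ℝ^p be a convex set contained in the nonnegative orthant. Let θ⁰, θ¹ ∈ ℝ^p and w⁰, w¹ ∈ S. Write r(θ) := (r_1(θ),…,r_p(θ)) ∈ ℝ^p. Assume: (a) w¹ minimizes w ↦ ½‖w − (w⁰ − τ r(θ⁰))‖₂² over S (projection step); (b) θ¹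 minimizes θ ↦ (1/(2η))‖θ − (θ⁰ − η ∇L(θ⁰))‖₂² + λ Σ_{i=1}^p w¹_i r_i(θ) over ℝ^p (proximal step). Then L(θ¹) + λ⟨w¹, r(θ¹)⟩ + (L_f/2)‖θ¹ − θ⁰‖₂² + (λ/τ)‖w¹ − w⁰‖₂² ≤ L(θ⁰) + λ⟨w⁰, r(θ⁰)⟩. -/
open Finset RealInnerProductSpace

/-- Helper: if `A ≤ B + c * t` for all small positive `t`, then `A ≤ B`. -/
lemma bcd_lim_helper (A B c : ℝ) (h : ∀ t : ℝ, 0 < t → t ≤ 1 → A ≤ B + c * t) :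
    A ≤ B := by
  refine le_of_forall_pos_le_add fun ε hε => ?_
  rcases le_or_gt c 0 with hc | hc
  · have := h 1 one_pos le_rfl; nlinarith
  · have ht0 : (0:ℝ) < min 1 (ε / c) := lt_min one_pos (div_pos hε hc)
    have := h _ ht0 (min_le_left _ _)
    have h2 : c * min 1 (ε / c) ≤ ε := by
      have : min 1 (ε / c) ≤ ε / c := min_le_right _ _
      calc c * min 1 (ε / c) ≤ c * (ε / c) := by nlinarith
        _ = ε := by field_simp
    linarith

variable {E : Type*} [NormedAddCommGroup E] [InnerProductSpace ℝ E] [CompleteSpace E]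

/-- The descent lemma for a differentiable function with Lipschitz gradient. -/
lemma bcd_descent_lemma (L : E → ℝ) (hLdiff : Differentiable ℝ L) (Lf : ℝ) (hLf : 0 ≤ Lf)
    (hLip : LipschitzWith (Real.toNNReal Lf) (gradient L)) (x y : E) :
    L y ≤ L x + ⟪gradient L x, y - x⟫ + Lf / 2 * ‖y - x‖ ^ 2 := by
  set δ := y - x with hδ
  have hcurve : ∀ t : ℝ, HasDerivAt (fun t : ℝ => x + t • δ) δ t := by
    intro t
    simpa using ((hasDerivAt_id t).smul_const δ).const_add x
  have hφ : ∀ t : ℝ, HasDerivAt (fun t : ℝ => L (x + t • δ))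
      ⟪gradient L (x + t • δ), δ⟫ t := by
    intro t
    have h1 := ((hLdiff (x + t • δ)).hasGradientAt).hasFDerivAt
    have h2 := h1.comp_hasDerivAt t (hcurve t)
    simpa [InnerProductSpace.toDual_apply_apply, Function.comp_def] using h2
  set g : ℝ → ℝ := fun t => L (x + t • δ) - t * ⟪gradient L x, δ⟫ - Lf / 2 * t ^ 2 * ‖δ‖ ^ 2
    with hg
  have hg' : ∀ t : ℝ, HasDerivAt g
      (⟪gradient L (x + t • δ), δ⟫ - ⟪gradient L x, δ⟫ - Lf * t * ‖δ‖ ^ 2) t := by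
    intro t
    have h1 : HasDerivAt (fun t : ℝ => t * ⟪gradient L x, δ⟫) ⟪gradient L x, δ⟫ t := by
      simpa using (hasDerivAt_id t).mul_const ⟪gradient L x, δ⟫
    have h2 : HasDerivAt (fun t : ℝ => Lf / 2 * t ^ 2 * ‖δ‖ ^ 2) (Lf * t * ‖δ‖ ^ 2) t := by
      have := ((hasDerivAt_pow 2 t).const_mul (Lf / 2)).mul_const (‖δ‖ ^ 2)
      refine this.congr_deriv ?_
      norm_num
      left; ring
    exact ((hφ t).sub h1).sub h2
  have hmono : AntitoneOn g (Set.Icc 0 1) := by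
    apply antitoneOn_of_deriv_nonpos (convex_Icc 0 1)
    · exact (fun t _ => (hg' t).differentiableAt.continuousAt.continuousWithinAt)
    · exact fun t _ => ((hg' t).differentiableAt).differentiableWithinAt
    · intro t ht
      rw [interior_Icc] at ht
      rw [(hg' t).deriv]
      have hCS : ⟪gradient L (x + t • δ) - gradient L x, δ⟫ ≤
          ‖gradient L (x + t • δ) - gradient L x‖ * ‖δ‖ := real_inner_le_norm _ _
      have hlip2 : ‖gradient L (x + t • δ) - gradient L x‖ ≤ Lf * (t * ‖δ‖) := by
        have := hLip.dist_le_mul (x + t • δ) x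
        rw [dist_eq_norm, dist_eq_norm, add_sub_cancel_left] at this
        calc ‖gradient L (x + t • δ) - gradient L x‖ ≤ Lf.toNNReal * ‖t • δ‖ := this
          _ = Lf * (t * ‖δ‖) := by
              rw [norm_smul, Real.coe_toNNReal _ hLf, Real.norm_eq_abs,
                abs_of_pos ht.1]
      have hsub : ⟪gradient L (x + t • δ) - gradient L x, δ⟫ =
          ⟪gradient L (x + t • δ), δ⟫ - ⟪gradient L x, δ⟫ := inner_sub_left _ _ _
      nlinarith [norm_nonneg δ, ht.1.le]
  have := hmono (Set.left_mem_Icc.2 zero_le_one) (Set.right_mem_Icc.2 zero_le_one) zero_le_one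
  simp only [hg, zero_smul, add_zero, one_smul, zero_mul, zero_pow, mul_zero, sub_zero,
    one_pow, mul_one, one_mul] at this
  have hy : x + δ = y := by rw [hδ]; abel
  rw [hy] at this
  linarith

omit [CompleteSpace E] in
lemma bcd_norm_expand (a b : E) (t : ℝ) :
    ‖a + t • b‖ ^ 2 = ‖a‖ ^ 2 + 2 * t * ⟪a, b⟫ + t ^ 2 * ‖b‖ ^ 2 := by
  rw [norm_add_sq_real, real_inner_smul_right, norm_smul, Real.norm_eq_abs, mul_pow, sq_abs]
  ring

/-- Per-iteration descent of the block coordinate descent algorithm (core of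
Theorem 3). One projection step in `w` followed by one proximal gradient step
in `θ` (with step size `η = 1/L_f`) decreases the objective
`F(θ, w) = L(θ) + λ ⟨w, r(θ)⟩` by at least
`(L_f/2)‖θ¹ - θ⁰‖² + (λ/τ)‖w¹ - w⁰‖²`.
Here `rθ₀` is the vector `r(θ⁰) = (r_1(θ⁰), …, r_p(θ⁰))`. -/
theorem bcd_per_iteration_descent
    (p : ℕ) (L : EuclideanSpace ℝ (Fin p) → ℝ) (hLdiff : Differentiable ℝ L)
    (Lf : ℝ) (hLf : 0 < Lf)
    (hLip : LipschitzWith (Real.toNNReal Lf) (gradient L))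
    (r : Fin p → EuclideanSpace ℝ (Fin p) → ℝ)
    (hr : ∀ i, ConvexOn ℝ Set.univ (r i))
    (lam τ η : ℝ) (hlam : 0 < lam) (hτ : 0 < τ) (hη : η = 1 / Lf)
    (S : Set (EuclideanSpace ℝ (Fin p))) (hSconv : Convex ℝ S)
    (hSnonneg : ∀ w ∈ S, ∀ i, 0 ≤ w i)
    (θ₀ θ₁ w₀ w₁ : EuclideanSpace ℝ (Fin p))
    (rθ₀ : EuclideanSpace ℝ (Fin p)) (hrθ₀ : ∀ i, rθ₀ i = r i θ₀)
    (hw₀ : w₀ ∈ S) (hw₁ : w₁ ∈ S)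
    (hproj : ∀ w ∈ S,
      ‖w₁ - (w₀ - τ • rθ₀)‖ ^ 2 / 2 ≤ ‖w - (w₀ - τ • rθ₀)‖ ^ 2 / 2)
    (hprox : ∀ θ : EuclideanSpace ℝ (Fin p),
      (1 / (2 * η)) * ‖θ₁ - (θ₀ - η • gradient L θ₀)‖ ^ 2 +
          lam * ∑ i, w₁ i * r i θ₁ ≤
        (1 / (2 * η)) * ‖θ - (θ₀ - η • gradient L θ₀)‖ ^ 2 +
          lam * ∑ i, w₁ i * r i θ) :
    L θ₁ + lam * (∑ i, w₁ i * r i θ₁) + (Lf / 2) * ‖θ₁ - θ₀‖ ^ 2 +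
        (lam / τ) * ‖w₁ - w₀‖ ^ 2 ≤
      L θ₀ + lam * (∑ i, w₀ i * r i θ₀) := by
  have hη0 : 0 < η := by rw [hη]; positivity
  have hηLf : η * Lf = 1 := by rw [hη]; field_simp
  -- ===== Step A : the projection step =====
  set z : EuclideanSpace ℝ (Fin p) := w₀ - τ • rθ₀ with hz
  set d : EuclideanSpace ℝ (Fin p) := w₀ - w₁ with hd
  have hseg : ∀ t : ℝ, 0 < t → t ≤ 1 → w₁ + t • d ∈ S := by
    intro t ht ht1
    have h := hSconv hw₁ hw₀ (by linarith : (0:ℝ) ≤ 1 - t) ht.le (by ring)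
    have he : w₁ + t • d = (1 - t) • w₁ + t • w₀ := by rw [hd]; module
    rw [he]; exact h
  have hA : 0 ≤ ⟪w₁ - z, d⟫ := by
    have h := bcd_lim_helper (-(2 * ⟪w₁ - z, d⟫)) 0 (‖d‖ ^ 2) ?_
    · linarith
    intro t ht ht1
    have h1 := hproj _ (hseg t ht ht1)
    have he : w₁ + t • d - z = (w₁ - z) + t • d := by abel
    rw [he, bcd_norm_expand] at h1
    have hd2 : 0 ≤ ‖d‖ ^ 2 := by positivity
    nlinarith
  have hinner_z : ⟪w₁ - z, d⟫ = -‖d‖ ^ 2 + τ * ⟪rθ₀, d⟫ := by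
    have he : w₁ - z = -d + τ • rθ₀ := by rw [hz, hd]; module
    rw [he, inner_add_left, inner_neg_left, real_inner_smul_left,
      real_inner_self_eq_norm_sq]
  have hinner_r : ⟪rθ₀, d⟫ = (∑ i, w₀ i * r i θ₀) - ∑ i, w₁ i * r i θ₀ := by
    rw [hd]
    simp only [PiLp.inner_apply, RCLike.inner_apply, conj_trivial, PiLp.sub_apply]
    rw [← Finset.sum_sub_distrib]
    refine Finset.sum_congr rfl fun i _ => ?_
    rw [hrθ₀]; ring
  have hnwd : ‖w₁ - w₀‖ = ‖d‖ := by rw [hd, norm_sub_rev]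
  have stepA : (lam / τ) * ‖w₁ - w₀‖ ^ 2 + lam * ∑ i, w₁ i * r i θ₀ ≤
      lam * ∑ i, w₀ i * r i θ₀ := by
    rw [hnwd]
    rw [hinner_z, hinner_r] at hA
    have h2 : ‖d‖ ^ 2 ≤ τ * ((∑ i, w₀ i * r i θ₀) - ∑ i, w₁ i * r i θ₀) := by linarith
    have h4 : (lam / τ) * ‖d‖ ^ 2 ≤ (lam / τ) * (τ * ((∑ i, w₀ i * r i θ₀) - ∑ i, w₁ i * r i θ₀)) :=
      mul_le_mul_of_nonneg_left h2 (by positivity)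
    have h5 : (lam / τ) * (τ * ((∑ i, w₀ i * r i θ₀) - ∑ i, w₁ i * r i θ₀)) =
        lam * ((∑ i, w₀ i * r i θ₀) - ∑ i, w₁ i * r i θ₀) := by
      field_simp
    rw [h5] at h4
    linarith
  -- ===== Step B : the proximal step =====
  set u : EuclideanSpace ℝ (Fin p) := θ₀ - η • gradient L θ₀ with hu
  set e : EuclideanSpace ℝ (Fin p) := θ₀ - θ₁ with he
  have hRconv : ∀ t : ℝ, 0 < t → t ≤ 1 →
      (∑ i, w₁ i * r i (θ₁ + t • e)) ≤
        (1 - t) * (∑ i, w₁ i * r i θ₁) + t * (∑ i, w₁ i * r i θ₀) := by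
    intro t ht ht1
    have heq : θ₁ + t • e = (1 - t) • θ₁ + t • θ₀ := by rw [he]; module
    rw [heq, Finset.mul_sum, Finset.mul_sum, ← Finset.sum_add_distrib]
    refine Finset.sum_le_sum fun i _ => ?_
    have hconv := (hr i).2 (Set.mem_univ θ₁) (Set.mem_univ θ₀)
      (by linarith : (0:ℝ) ≤ 1 - t) ht.le (by ring)
    rw [smul_eq_mul, smul_eq_mul] at hconv
    have hwi := hSnonneg w₁ hw₁ i
    nlinarith [mul_le_mul_of_nonneg_left hconv hwi]
  have hB : lam * (∑ i, w₁ i * r i θ₁) ≤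
      (1 / η) * ⟪θ₁ - u, e⟫ + lam * (∑ i, w₁ i * r i θ₀) := by
    apply bcd_lim_helper _ _ ((1 / (2 * η)) * ‖e‖ ^ 2)
    intro t ht ht1
    have h1 := hprox (θ₁ + t • e)
    have heq : θ₁ + t • e - u = (θ₁ - u) + t • e := by abel
    rw [heq, bcd_norm_expand] at h1
    have h2 := mul_le_mul_of_nonneg_left (hRconv t ht ht1) hlam.le
    have hexp : (1 / (2 * η)) * (‖θ₁ - u‖ ^ 2 + 2 * t * ⟪θ₁ - u, e⟫ + t ^ 2 * ‖e‖ ^ 2) =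
        (1 / (2 * η)) * ‖θ₁ - u‖ ^ 2 + (1 / η) * t * ⟪θ₁ - u, e⟫ +
          (1 / (2 * η)) * ‖e‖ ^ 2 * t ^ 2 := by
      field_simp
    rw [hexp] at h1
    have h3 : t * (lam * (∑ i, w₁ i * r i θ₁)) ≤
        t * ((1 / η) * ⟪θ₁ - u, e⟫ + lam * (∑ i, w₁ i * r i θ₀) +
          (1 / (2 * η)) * ‖e‖ ^ 2 * t) := by linarith [h1, h2]
    exact le_of_mul_le_mul_left h3 ht
  have hinner_u : ⟪θ₁ - u, e⟫ = -‖e‖ ^ 2 + η * ⟪gradient L θ₀, e⟫ := by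
    have heq : θ₁ - u = -e + η • gradient L θ₀ := by rw [hu, he]; module
    rw [heq, inner_add_left, inner_neg_left, real_inner_smul_left,
      real_inner_self_eq_norm_sq]
  -- ===== descent lemma =====
  have hdesc := bcd_descent_lemma L hLdiff Lf hLf.le hLip θ₀ θ₁
  have hinner_desc : ⟪gradient L θ₀, θ₁ - θ₀⟫ = -⟪gradient L θ₀, e⟫ := by
    have : θ₁ - θ₀ = -e := by rw [he]; abel
    rw [this, inner_neg_right]
  have hne : ‖θ₁ - θ₀‖ = ‖e‖ := by rw [he, norm_sub_rev]
  rw [hinner_desc, hne] at hdesc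
  -- combine
  have hBu : lam * (∑ i, w₁ i * r i θ₁) ≤
      -(1 / η) * ‖e‖ ^ 2 + ⟪gradient L θ₀, e⟫ + lam * (∑ i, w₁ i * r i θ₀) := by
    rw [hinner_u] at hB
    have : (1 / η) * (-‖e‖ ^ 2 + η * ⟪gradient L θ₀, e⟫) =
        -(1 / η) * ‖e‖ ^ 2 + ⟪gradient L θ₀, e⟫ := by field_simp
    linarith [hB, this.le]
  have hLfη : 1 / η = Lf := by rw [hη]; field_simp
  rw [hLfη] at hBu
  rw [hne]
  linarith [hdesc, hBu, stepA]
end
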